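/- Let n = 2^k with k > 1 and let q be odd. Then the sign of the permutation of Z/nZ given by multiplication by q equals (-1)^{(q-1)/2}. -/

import Mathlib

open Equiv

/-- Sign of right translation by `g` on a finite group. -/
private theorem sign_mulRight_eq {G : Type*} [Group G] [Fintype G] [DecidableEq G] (g : G) :
    Equiv.Perm.sign (Equiv.mulRight g) =
      (-1 : ℤˣ) ^ ((orderOf g - 1) * (Fintype.card G / orderOf g)) := by
  classical
  set H := Subgroup.zpowers g with hH
  set g₀ : H := ⟨g, Subgroup.mem_zpowers g⟩ with hg₀def
  have memH : ∀ x : G, ((QuotientGroup.mk x : G ⧸ H).out)⁻¹ * x ∈ H := by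
    intro x
    have h1 : (QuotientGroup.mk ((QuotientGroup.mk x : G ⧸ H).out) : G ⧸ H)
        = QuotientGroup.mk x := QuotientGroup.out_eq' _
    exact (QuotientGroup.eq).mp h1
  let e : G ≃ (G ⧸ H) × H :=
    { toFun := fun x => (QuotientGroup.mk x, ⟨((QuotientGroup.mk x : G ⧸ H).out)⁻¹ * x, memH x⟩)
      invFun := fun p => p.1.out * (p.2 : G)
      left_inv := fun x => by simp [mul_inv_cancel_left]
      right_inv := by
        rintro ⟨c, h⟩
        have h1 : (QuotientGroup.mk (c.out * (h : G)) : G ⧸ H) = c := by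
          rw [QuotientGroup.mk_mul_of_mem _ h.2, QuotientGroup.out_eq']
        refine Prod.ext h1 (Subtype.ext ?_)
        simp only [h1]
        exact inv_mul_cancel_left _ _ }
  have key : e.permCongr (Equiv.mulRight g)
      = Equiv.prodCongrRight (fun _ : G ⧸ H => Equiv.mulRight g₀) := by
    refine Equiv.ext ?_
    rintro ⟨c, h⟩
    have hmem : (h : G) * g ∈ H := mul_mem h.2 (Subgroup.mem_zpowers g)
    rw [Equiv.permCongr_apply, Equiv.prodCongrRight_apply]
    have hsymm : e.symm (c, h) = c.out * (h : G) := rfl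
    rw [hsymm, Equiv.coe_mulRight]
    have h1 : (QuotientGroup.mk (c.out * (h : G) * g) : G ⧸ H) = c := by
      rw [mul_assoc, QuotientGroup.mk_mul_of_mem _ hmem, QuotientGroup.out_eq']
    have he : e (c.out * (h : G) * g)
        = (QuotientGroup.mk (c.out * (h : G) * g),
           ⟨((QuotientGroup.mk (c.out * (h : G) * g) : G ⧸ H).out)⁻¹
              * (c.out * (h : G) * g), memH _⟩) := rfl
    rw [he]
    refine Prod.ext h1 (Subtype.ext ?_)
    simp only [h1]
    show (c.out)⁻¹ * (c.out * (h : G) * g) = (h : G) * g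
    rw [mul_assoc, inv_mul_cancel_left]
  have hd : 0 < orderOf g := orderOf_pos g
  have hcardH : Fintype.card H = orderOf g := Fintype.card_zpowers
  have hquot : Fintype.card (G ⧸ H) = Fintype.card G / orderOf g := by
    have h2 := Subgroup.card_eq_card_quotient_mul_card_subgroup H
    rw [Nat.card_eq_fintype_card, Nat.card_eq_fintype_card, Nat.card_eq_fintype_card, hcardH] at h2
    exact (Nat.div_eq_of_eq_mul_left hd h2).symm
  have hsub : Equiv.Perm.sign (Equiv.mulRight g₀) = (-1 : ℤˣ) ^ (orderOf g - 1) := by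
    rcases eq_or_ne g 1 with rfl | hg1
    · have hg01 : g₀ = 1 := Subtype.ext rfl
      rw [hg01, Equiv.mulRight_one]
      simp
    · have hg₀1 : g₀ ≠ 1 := fun hh => hg1 (congrArg Subtype.val hh)
      have hcyc : (Equiv.mulRight g₀).IsCycle := by
        refine ⟨1, by simpa using hg₀1, fun y hy => ?_⟩
        obtain ⟨i, hi⟩ := Subgroup.mem_zpowers_iff.mp y.2
        refine ⟨i, ?_⟩
        rw [Equiv.zpow_mulRight]
        show (1 : H) * g₀ ^ i = y
        rw [one_mul]
        exact Subtype.ext (by simpa using hi)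
      have hsupp : (Equiv.mulRight g₀).support = Finset.univ := by
        refine Finset.eq_univ_iff_forall.mpr fun y => ?_
        rw [Equiv.Perm.mem_support, Equiv.coe_mulRight]
        intro hy
        exact hg₀1 (left_eq_mul.mp hy.symm)
      have hs := hcyc.sign
      rw [hsupp, Finset.card_univ, hcardH] at hs
      rw [hs]
      have hsucc : orderOf g = (orderOf g - 1) + 1 := (Nat.succ_pred_eq_of_pos hd).symm
      rw [hsucc, pow_succ]
      simp
  calc Equiv.Perm.sign (Equiv.mulRight g)
      = Equiv.Perm.sign (e.permCongr (Equiv.mulRight g)) :=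
        (Equiv.Perm.sign_permCongr e _).symm
    _ = Equiv.Perm.sign (Equiv.prodCongrRight fun _ : G ⧸ H => Equiv.mulRight g₀) := by rw [key]
    _ = ∏ _c : G ⧸ H, Equiv.Perm.sign (Equiv.mulRight g₀) := Equiv.Perm.sign_prodCongrRight _
    _ = ((-1 : ℤˣ) ^ (orderOf g - 1)) ^ Fintype.card (G ⧸ H) := by
        rw [hsub, Finset.prod_const, Finset.card_univ]
    _ = (-1 : ℤˣ) ^ ((orderOf g - 1) * (Fintype.card G / orderOf g)) := by
        rw [← pow_mul, hquot]

private theorem odd_pow_two_dvd (q : ℤ) (hq : Odd q) (j : ℕ) :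
    (2 : ℤ) ^ (j + 3) ∣ q ^ (2 ^ (j + 1)) - 1 := by
  induction j with
  | zero =>
      obtain ⟨t, rfl⟩ := hq
      obtain ⟨c, hc⟩ := Int.even_mul_succ_self t
      refine ⟨c, ?_⟩
      have h1 : (2 * t + 1) ^ (2 ^ (0 + 1)) - 1 = 4 * (t * (t + 1)) := by ring
      rw [h1, hc]
      ring
  | succ j ih =>
      have hfact : q ^ (2 ^ (j + 2)) - 1
          = (q ^ (2 ^ (j + 1)) - 1) * (q ^ (2 ^ (j + 1)) + 1) := by
        have h2 : 2 ^ (j + 2) = 2 ^ (j + 1) * 2 := by rw [pow_succ]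
        rw [h2, pow_mul]
        ring
      have heven : (2 : ℤ) ∣ q ^ (2 ^ (j + 1)) + 1 := by
        obtain ⟨t, ht⟩ := hq.pow (n := 2 ^ (j + 1))
        exact ⟨t + 1, by omega⟩
      have hsplit : (2 : ℤ) ^ (j + 1 + 3) = 2 ^ (j + 3) * 2 := by rw [pow_succ]
      rw [hfact, hsplit]
      exact mul_dvd_mul ih heven

private theorem qpow_cast_eq_one (q : ℤ) (hq : Odd q) (s : ℕ) :
    (q : ZMod (2 ^ s)) ^ (2 ^ (s + 1)) = 1 := by
  have h := odd_pow_two_dvd q hq s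
  have h2 : ((2 : ℤ)) ^ s ∣ q ^ (2 ^ (s + 1)) - 1 :=
    dvd_trans (pow_dvd_pow 2 (by omega)) h
  have h0 : ((q ^ 2 ^ (s + 1) - 1 : ℤ) : ZMod (2 ^ s)) = 0 := by
    rw [ZMod.intCast_zmod_eq_zero_iff_dvd]
    exact_mod_cast h2
  push_cast at h0
  linear_combination h0

private theorem isUnit_qcast (q : ℤ) (hq : Odd q) (s : ℕ) : IsUnit (q : ZMod (2 ^ s)) := by
  refine IsUnit.of_mul_eq_one ((q : ZMod (2 ^ s)) ^ (2 ^ (s + 1) - 1)) ?_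
  rw [← pow_succ']
  have h1 : 2 ^ (s + 1) - 1 + 1 = 2 ^ (s + 1) := Nat.succ_pred_eq_of_pos (Nat.pow_pos (by norm_num))
  rw [h1]
  exact qpow_cast_eq_one q hq s

private theorem helper (q : ℤ) (hq : Odd q) (k : ℕ) (hk : 2 ≤ k) (n : ℕ) [hNZ : NeZero n]
    (hn : n = 2 ^ k) (π : Equiv.Perm (ZMod n)) (hπ : ∀ x, π x = (q : ZMod n) * x) :
    Equiv.Perm.sign π = (-1 : ℤˣ) ^ ((q - 1) / 2) := by
  induction k, hk using Nat.le_induction generalizing n hNZ π hπ with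
  | base =>
      subst hn
      obtain ⟨t, ht⟩ := hq
      rcases Int.even_or_odd t with ⟨m, hm⟩ | ⟨m, hm⟩
      · -- q = 4m+1
        have hcast : (q : ZMod (2 ^ 2)) = 1 := by
          have h0 : (4 : ZMod (2 ^ 2)) = 0 := by decide
          rw [ht, hm]
          push_cast
          linear_combination (m : ZMod (2 ^ 2)) * h0
        have hrefl : π = Equiv.refl _ := Equiv.ext fun x => by rw [hπ, hcast, one_mul]; rfl
        have hdiv : (q - 1) / 2 = m + m := by
          have h1 : q - 1 = 2 * (m + m) := by omega
          rw [h1, Int.mul_ediv_cancel_left _ two_ne_zero]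
        rw [hrefl, Equiv.Perm.sign_refl, hdiv, zpow_add]
        exact (Int.units_mul_self _).symm
      · -- q = 4m+3
        have hcast : (q : ZMod (2 ^ 2)) = 3 := by
          have h0 : (4 : ZMod (2 ^ 2)) = 0 := by decide
          rw [ht, hm]
          push_cast
          linear_combination (m : ZMod (2 ^ 2)) * h0
        have hswap : π = Equiv.swap (1 : ZMod (2 ^ 2)) 3 := by
          refine Equiv.ext fun x => ?_
          rw [hπ, hcast]
          revert x
          decide
        have hdiv : (q - 1) / 2 = m + m + 1 := by
          have h1 : q - 1 = 2 * (m + m + 1) := by omega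
          rw [h1, Int.mul_ediv_cancel_left _ two_ne_zero]
        rw [hswap, Equiv.Perm.sign_swap (by decide), hdiv, zpow_add, zpow_add, zpow_one,
          Int.units_mul_self, one_mul]
  | succ k hk ih =>
      subst hn
      obtain ⟨j, rfl⟩ : ∃ j, k = j + 2 := ⟨k - 2, by omega⟩
      classical
      haveI : NeZero (2 ^ (j + 2)) := ⟨by positivity⟩
      -- the unit given by q mod 2^(j+3)
      have hqu : IsUnit (q : ZMod (2 ^ (j + 2 + 1))) := isUnit_qcast q hq (j + 3)
      set u : (ZMod (2 ^ (j + 2 + 1)))ˣ := hqu.unit with hudef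
      have huval : (u : ZMod (2 ^ (j + 2 + 1))) = (q : ZMod (2 ^ (j + 2 + 1))) := hqu.unit_spec
      -- tight order bound for u
      have hq1 : (q : ZMod (2 ^ (j + 2 + 1))) ^ (2 ^ (j + 1)) = 1 := by
        have h := odd_pow_two_dvd q hq j
        have h0 : ((q ^ 2 ^ (j + 1) - 1 : ℤ) : ZMod (2 ^ (j + 3))) = 0 := by
          rw [ZMod.intCast_zmod_eq_zero_iff_dvd]
          exact_mod_cast h
        push_cast at h0
        linear_combination h0
      have hupow : u ^ (2 ^ (j + 1)) = 1 :=
        Units.ext (by rw [Units.val_pow_eq_pow_val, huval, hq1, Units.val_one])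
      -- unit mod 2^(j+2)
      have hqu' : IsUnit (q : ZMod (2 ^ (j + 2))) := isUnit_qcast q hq (j + 2)
      set u' : (ZMod (2 ^ (j + 2)))ˣ := hqu'.unit with hu'def
      have hu'val : (u' : ZMod (2 ^ (j + 2))) = (q : ZMod (2 ^ (j + 2))) := hqu'.unit_spec
      -- the doubling additive hom
      have hfadd : ∀ a b : ℤ, ((2 * (a + b) : ℤ) : ZMod (2 ^ (j + 2 + 1)))
          = ((2 * a : ℤ) : ZMod (2 ^ (j + 2 + 1))) + ((2 * b : ℤ) : ZMod (2 ^ (j + 2 + 1))) := by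
        intro a b
        push_cast
        ring
      set f : ℤ →+ ZMod (2 ^ (j + 2 + 1)) :=
        AddMonoidHom.mk' (fun a : ℤ => ((2 * a : ℤ) : ZMod (2 ^ (j + 2 + 1)))) hfadd with hfdef
      have hfM : f ((2 ^ (j + 2) : ℕ) : ℤ) = 0 := by
        show ((2 * (2 ^ (j + 2) : ℕ) : ℤ) : ZMod (2 ^ (j + 2 + 1))) = 0
        rw [ZMod.intCast_zmod_eq_zero_iff_dvd]
        push_cast
        rw [pow_succ]
        exact ⟨1, by ring⟩
      set d : ZMod (2 ^ (j + 2)) →+ ZMod (2 ^ (j + 2 + 1)) :=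
        ZMod.lift (2 ^ (j + 2)) ⟨f, hfM⟩ with hddef
      have hdspec : ∀ a : ℤ, d ((a : ℤ) : ZMod (2 ^ (j + 2)))
          = ((2 * a : ℤ) : ZMod (2 ^ (j + 2 + 1))) := by
        intro a
        exact ZMod.lift_coe _ _ a
      -- d commutes with multiplication by q
      have hd_mul : ∀ x : ZMod (2 ^ (j + 2)),
          d ((q : ZMod (2 ^ (j + 2))) * x) = (q : ZMod (2 ^ (j + 2 + 1))) * d x := by
        intro x
        obtain ⟨a, rfl⟩ := ZMod.intCast_surjective x
        rw [← Int.cast_mul, hdspec, hdspec]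
        push_cast
        ring
      -- d is injective
      have hdinj : Function.Injective d := by
        rw [injective_iff_map_eq_zero]
        intro x hx
        obtain ⟨a, rfl⟩ := ZMod.intCast_surjective x
        rw [hdspec, ZMod.intCast_zmod_eq_zero_iff_dvd] at hx
        rw [ZMod.intCast_zmod_eq_zero_iff_dvd]
        have h2 : ((2 ^ (j + 2 + 1) : ℕ) : ℤ) = 2 * ((2 ^ (j + 2) : ℕ) : ℤ) := by
          push_cast
          rw [pow_succ]
          ring
        rw [h2] at hx
        exact (mul_dvd_mul_iff_left (by norm_num : (2:ℤ) ≠ 0)).mp hx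
      -- d never lands on a unit
      have hdnu : ∀ x : ZMod (2 ^ (j + 2)), ¬ IsUnit (d x) := by
        intro x hx
        obtain ⟨a, rfl⟩ := ZMod.intCast_surjective x
        rw [hdspec] at hx
        have h2 : (2 : ℕ) ∣ 2 ^ (j + 2 + 1) := dvd_pow_self 2 (by omega)
        have hmap := hx.map (ZMod.castHom h2 (ZMod 2))
        rw [map_intCast] at hmap
        have : ((2 * a : ℤ) : ZMod 2) = 0 := by
          rw [ZMod.intCast_zmod_eq_zero_iff_dvd]
          exact ⟨a, by push_cast; ring⟩
        rw [this] at hmap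
        exact (by decide : ¬ IsUnit (0 : ZMod 2)) hmap
      -- the gluing bijection
      set F : ZMod (2 ^ (j + 2)) ⊕ (ZMod (2 ^ (j + 2 + 1)))ˣ → ZMod (2 ^ (j + 2 + 1)) :=
        Sum.elim (fun x => d x) (fun v => (v : ZMod (2 ^ (j + 2 + 1)))) with hFdef
      have hFinj : Function.Injective F := by
        rintro (x | v) (y | w) h
        · exact congrArg Sum.inl (hdinj h)
        · simp only [hFdef, Sum.elim_inl, Sum.elim_inr] at h
          exact (hdnu x (by rw [h]; exact Units.isUnit w)).elim
        · simp only [hFdef, Sum.elim_inl, Sum.elim_inr] at h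
          exact (hdnu y (by rw [← h]; exact Units.isUnit v)).elim
        · exact congrArg Sum.inr (Units.ext h)
      have htot : Nat.totient (2 ^ (j + 2 + 1)) = 2 ^ (j + 2) := by
        rw [Nat.totient_prime_pow Nat.prime_two (by omega : 0 < j + 2 + 1)]
        simp
      have hcard : Fintype.card (ZMod (2 ^ (j + 2)) ⊕ (ZMod (2 ^ (j + 2 + 1)))ˣ)
          = Fintype.card (ZMod (2 ^ (j + 2 + 1))) := by
        rw [Fintype.card_sum, ZMod.card, ZMod.card, ZMod.card_units_eq_totient, htot, pow_succ]
        ring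
      set e : (ZMod (2 ^ (j + 2)) ⊕ (ZMod (2 ^ (j + 2 + 1)))ˣ) ≃ ZMod (2 ^ (j + 2 + 1)) :=
        Equiv.ofBijective F ((Fintype.bijective_iff_injective_and_card F).mpr ⟨hFinj, hcard⟩)
        with hedef
      -- the two component permutations
      set π' : Equiv.Perm (ZMod (2 ^ (j + 2))) := MulAction.toPerm u' with hπ'def
      have hπ'spec : ∀ x, π' x = (q : ZMod (2 ^ (j + 2))) * x := by
        intro x
        show (u' : ZMod (2 ^ (j + 2))) * x = (q : ZMod (2 ^ (j + 2))) * x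
        rw [hu'val]
      set τ : Equiv.Perm ((ZMod (2 ^ (j + 2 + 1)))ˣ) := Equiv.mulLeft u with hτdef
      set σ := Equiv.sumCongr π' τ with hσdef
      have hcomm : ∀ s, π (F s) = F (σ s) := by
        rintro (x | v)
        · show π (d x) = d (π' x)
          rw [hπ, hπ'spec, hd_mul]
        · show π (v : ZMod (2 ^ (j + 2 + 1))) = ((u * v : (ZMod (2 ^ (j + 2 + 1)))ˣ) : _)
          rw [hπ, Units.val_mul, huval]
      have hconj : Equiv.permCongr e.symm π = σ := by
        refine Equiv.ext fun s => ?_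
        rw [Equiv.permCongr_apply, Equiv.symm_symm]
        have h1 : e s = F s := rfl
        rw [h1, hcomm s]
        have h2 : F (σ s) = e (σ s) := rfl
        rw [h2, Equiv.symm_apply_apply]
      have hsign : Equiv.Perm.sign π = Equiv.Perm.sign π' * Equiv.Perm.sign τ := by
        rw [← Equiv.Perm.sign_permCongr e.symm π, hconj, hσdef, Equiv.Perm.sign_sumCongr]
      -- sign of τ is 1
      have hτR : τ = Equiv.mulRight u := Equiv.ext fun v => mul_comm u v
      have hτ1 : Equiv.Perm.sign τ = 1 := by
        rw [hτR, sign_mulRight_eq]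
        have hord : orderOf u ∣ 2 ^ (j + 1) := orderOf_dvd_of_pow_eq_one hupow
        obtain ⟨i, hi, hdeq⟩ := (Nat.dvd_prime_pow Nat.prime_two).mp hord
        have hcardU : Fintype.card ((ZMod (2 ^ (j + 2 + 1)))ˣ) = 2 ^ (j + 2) := by
          rw [ZMod.card_units_eq_totient, htot]
        rw [hcardU, hdeq]
        have hdiv : 2 ^ (j + 2) / 2 ^ i = 2 ^ (j + 2 - i) :=
          Nat.pow_div (by omega) (by norm_num)
        rw [hdiv]
        have heven : Even (2 ^ (j + 2 - i)) :=
          ⟨2 ^ (j + 1 - i), by rw [show j + 2 - i = (j + 1 - i) + 1 by omega, pow_succ]; ring⟩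
        exact (heven.mul_left _).neg_one_pow
      rw [hsign, hτ1, mul_one]
      exact ih (2 ^ (j + 2)) rfl π' hπ'spec

/-- Let `n = 2^k` with `k > 1` and let `q` be odd.  Then the sign of the permutation of `ℤ/nℤ`
given by multiplication by `q` equals `(-1)^{(q-1)/2}`. -/
theorem sign_mul_perm_two_pow
    (k n : ℕ) [NeZero n] (hk : 1 < k) (hn : n = 2 ^ k) (q : ℤ) (hq : Odd q)
    (π : Equiv.Perm (ZMod n)) (hπ : ∀ x : ZMod n, π x = (q : ZMod n) * x) :
    Equiv.Perm.sign π = (-1 : ℤˣ) ^ ((q - 1) / 2) := by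
  exact helper q hq k (by omega) n hn π hπ
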